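/- If T is a tree rooted at r that has the cut-off property, then r can acquire all the weight of T via total acquisition moves; in particular, the total acquisition number of T is 1. -/

import Mathlib

open Finset

/-- A total acquisition move in graph `G`. -/
def AcqMove {V : Type*} [DecidableEq V] (G : SimpleGraph V) (w w' : V → ℕ) : Prop :=
  ∃ u v, G.Adj u v ∧ 0 < w u ∧ w u ≤ w v ∧
    w' = Function.update (Function.update w u 0) v (w v + w u)

/-- Reachability by acquisition moves. -/
def AcqReach {V : Type*} [DecidableEq V] (G : SimpleGraph V) : (V → ℕ) → (V → ℕ) → Prop :=
  Relation.ReflTransGen (AcqMove G)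

/-- No legal acquisition move remains. -/
def AcqMaximal {V : Type*} [DecidableEq V] (G : SimpleGraph V) (w : V → ℕ) : Prop :=
  ¬ ∃ w', AcqMove G w w'

/-- The size of the residual set (vertices with positive weight). -/
noncomputable def residualCard {V : Type*} (w : V → ℕ) : ℕ :=
  Nat.card {v : V // 0 < w v}

/-- The total acquisition number: the minimum size of a residual set over all
maximal sequences of acquisition moves starting from the all-ones configuration. -/
noncomputable def atNum {V : Type*} [DecidableEq V] (G : SimpleGraph V) : ℕ :=
  sInf { k | ∃ w, AcqReach G (fun _ => 1) w ∧ AcqMaximal G w ∧ residualCard w = k }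

/-- A finite rooted tree, given by a parent function. -/
structure RTree (V : Type*) where
  parent : V → V
  root : V
  root_fixed : parent root = root
  reach : ∀ v, ∃ n, parent^[n] v = root

open scoped Classical in
/-- The subtree (set of descendants, including `v` itself) rooted at `v`. -/
noncomputable def RTree.subtree {V : Type*} [Fintype V] (T : RTree V) (v : V) :
    Finset V :=
  Finset.univ.filter fun u => ∃ n, T.parent^[n] u = v

/-- `u` is a child of `v`. -/
def RTree.isChild {V : Type*} (T : RTree V) (u v : V) : Prop :=
  u ≠ T.root ∧ T.parent u = v

/-- The underlying (undirected) graph of a rooted tree. -/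
def RTree.graph {V : Type*} (T : RTree V) : SimpleGraph V :=
  SimpleGraph.fromRel fun u v => u ≠ T.root ∧ T.parent u = v

/-- The cut-off property: for each vertex `v`, its children can be enumerated
`v₁, …, v_k` so that, for some `i'`, the subtree rooted at `vᵢ` has exactly `2^(i-1)`
vertices for `i ≤ i'` and at most `2^(i')` vertices for `i > i'`
(here stated with 0-based indices). -/
def RTree.CutOff {V : Type*} [Fintype V] (T : RTree V) : Prop :=
  ∀ v : V, ∃ l : List V, l.Nodup ∧ (∀ u, u ∈ l ↔ T.isChild u v) ∧
    ∃ i' : ℕ,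
      (∀ (i : ℕ) (h : i < l.length), i < i' → (T.subtree l[i]).card = 2 ^ i) ∧
      (∀ (i : ℕ) (h : i < l.length), i' ≤ i → (T.subtree l[i]).card ≤ 2 ^ i')


section Basic

set_option linter.unusedSectionVars false

variable {V : Type*} [Fintype V] [DecidableEq V] (T : RTree V)

lemma RTree.iterate_root : ∀ n, T.parent^[n] T.root = T.root := by
  intro n; induction n with
  | zero => rfl
  | succ n ih => rw [Function.iterate_succ_apply', ih, T.root_fixed]

lemma RTree.cycle_root {x : V} {m : ℕ} (hm : 0 < m)
    (hx : T.parent^[m] x = x) : x = T.root := by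
  obtain ⟨n, hn⟩ := T.reach x
  have hk : ∀ k, T.parent^[k * m] x = x := by
    intro k; induction k with
    | zero => simp
    | succ k ih => rw [Nat.succ_mul, Function.iterate_add_apply, hx, ih]
  have hnm : n ≤ n * m := Nat.le_mul_of_pos_right n hm
  have h2 : T.parent^[n * m] x = T.root := by
    have h3 : T.parent^[(n*m - n) + n] x = T.parent^[n*m - n] T.root := by
      rw [Function.iterate_add_apply, hn]
    rwa [Nat.sub_add_cancel hnm, T.iterate_root] at h3
  rw [hk n] at h2; exact h2

lemma RTree.mem_subtree {u v : V} : u ∈ T.subtree v ↔ ∃ n, T.parent^[n] u = v := by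
  simp [RTree.subtree]

lemma RTree.self_mem_subtree (v : V) : v ∈ T.subtree v := (T.mem_subtree).2 ⟨0, rfl⟩

lemma RTree.subtree_subset {u v : V} (h : T.isChild u v) : T.subtree u ⊆ T.subtree v := by
  intro x hx
  rw [T.mem_subtree] at hx ⊢
  obtain ⟨n, hn⟩ := hx
  exact ⟨n + 1, by rw [Function.iterate_succ_apply', hn, h.2]⟩

lemma RTree.not_mem_subtree_child {u v : V} (h : T.isChild u v) : v ∉ T.subtree u := by
  intro hv
  rw [T.mem_subtree] at hv
  obtain ⟨n, hn⟩ := hv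
  have hc : T.parent^[n + 1] v = v := by
    rw [Function.iterate_succ_apply', hn, h.2]
  have hvr : v = T.root := T.cycle_root (Nat.succ_pos n) hc
  have : u = T.root := by
    rw [hvr] at hn; rw [← hn, T.iterate_root]
  exact h.1 this

lemma RTree.child_ne (h : T.isChild u v) : u ≠ v := by
  intro he
  exact h.1 (T.cycle_root (m := 1) Nat.one_pos (by simpa [he] using h.2))

lemma RTree.subtree_disjoint {u₁ u₂ v : V} (h1 : T.isChild u₁ v) (h2 : T.isChild u₂ v)
    (hne : u₁ ≠ u₂) {x : V} (hx1 : x ∈ T.subtree u₁) (hx2 : x ∈ T.subtree u₂) : False := by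
  rw [T.mem_subtree] at hx1 hx2
  obtain ⟨m, hm⟩ := hx1
  obtain ⟨n, hn⟩ := hx2
  have key : ∀ (a b : V), T.isChild a v → T.isChild b v → a ≠ b →
      ∀ (p q : ℕ), p ≤ q → T.parent^[p] x = a → T.parent^[q] x = b → False := by
    intro a b ha hb hab p q hpq hp hq
    have h3 : T.parent^[q - p] a = b := by
      rw [← hp, ← Function.iterate_add_apply, Nat.sub_add_cancel hpq, hq]
    rcases Nat.eq_zero_or_pos (q - p) with h0 | hpos
    · rw [h0] at h3; exact hab h3
    · obtain ⟨k, hk⟩ := Nat.exists_eq_add_of_lt hpos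
      rw [Nat.zero_add] at hk
      have h4 : T.parent^[k] v = b := by
        rw [hk] at h3
        rw [← h3, Function.iterate_add_apply]
        simp [ha.2]
      have h5 : T.parent^[k + 1] v = v := by
        rw [Function.iterate_succ_apply', h4, hb.2]
      have hvr : v = T.root := T.cycle_root (Nat.succ_pos k) h5
      apply hb.1
      rw [← h4, hvr, T.iterate_root]
  rcases le_total m n with hle | hle
  · exact key u₁ u₂ h1 h2 hne m n hle hm hn
  · exact key u₂ u₁ h2 h1 hne.symm n m hle hn hm

lemma RTree.mem_subtree_cases {x v : V} (hx : x ∈ T.subtree v) (hne : x ≠ v) :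
    ∃ u, T.isChild u v ∧ x ∈ T.subtree u := by
  classical
  have hex : ∃ n, T.parent^[n] x = v := (T.mem_subtree).1 hx
  have hn0 : Nat.find hex ≠ 0 := by
    intro h0
    have := Nat.find_spec hex
    rw [h0] at this
    exact hne this
  obtain ⟨k, hk⟩ := Nat.exists_eq_succ_of_ne_zero hn0
  refine ⟨T.parent^[k] x, ⟨?_, ?_⟩, (T.mem_subtree).2 ⟨k, rfl⟩⟩
  · intro hroot
    have hspec := Nat.find_spec hex
    rw [hk, Function.iterate_succ_apply', hroot, T.root_fixed] at hspec
    have : T.parent^[k] x = v := by rw [hroot, ← hspec]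
    exact absurd this (Nat.find_min hex (by omega))
  · have hspec := Nat.find_spec hex
    rw [hk, Function.iterate_succ_apply'] at hspec
    exact hspec

lemma RTree.subtree_root : T.subtree T.root = Finset.univ := by
  ext x
  simp only [Finset.mem_univ, iff_true, T.mem_subtree]
  exact T.reach x

lemma RTree.adj_of_child {u v : V} (h : T.isChild u v) : T.graph.Adj u v := by
  simp only [RTree.graph, SimpleGraph.fromRel_adj]
  exact ⟨T.child_ne h, Or.inl h⟩

end Basic

section Acq

set_option linter.unusedSectionVars false

variable {V : Type*} [Fintype V] [DecidableEq V] (T : RTree V)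

lemma RTree.card_subtree_eq {v : V} {l : List V} (hnd : l.Nodup)
    (hmem : ∀ u, u ∈ l ↔ T.isChild u v) :
    (T.subtree v).card = 1 + (l.map fun u => (T.subtree u).card).sum := by
  classical
  have hdecomp : T.subtree v = insert v (l.toFinset.biUnion fun u => T.subtree u) := by
    ext x
    simp only [Finset.mem_insert, Finset.mem_biUnion, List.mem_toFinset]
    constructor
    · intro hx
      by_cases hxv : x = v
      · exact Or.inl hxv
      · obtain ⟨u, hu, hxu⟩ := T.mem_subtree_cases hx hxv
        exact Or.inr ⟨u, (hmem u).2 hu, hxu⟩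
    · rintro (rfl | ⟨u, hu, hxu⟩)
      · exact T.self_mem_subtree x
      · exact T.subtree_subset ((hmem u).1 hu) hxu
  have hvnot : v ∉ l.toFinset.biUnion fun u => T.subtree u := by
    simp only [Finset.mem_biUnion, List.mem_toFinset, not_exists]
    rintro u ⟨hu, hv⟩
    exact T.not_mem_subtree_child ((hmem u).1 hu) hv
  rw [hdecomp, Finset.card_insert_of_notMem hvnot, Finset.card_biUnion, Nat.add_comm]
  · congr 1
    rw [← List.sum_toFinset (fun u => (T.subtree u).card) hnd]
  · intro u₁ h₁ u₂ h₂ hne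
    rw [Finset.mem_coe, List.mem_toFinset] at h₁ h₂
    rw [Function.onFun, Finset.disjoint_left]
    intro x hx1 hx2
    exact T.subtree_disjoint ((hmem u₁).1 h₁) ((hmem u₂).1 h₂) hne hx1 hx2

noncomputable def unionSubtrees : List V → Finset V
  | [] => ∅
  | u :: l => T.subtree u ∪ unionSubtrees l

lemma mem_unionSubtrees {x : V} : ∀ {l : List V},
    x ∈ unionSubtrees T l ↔ ∃ u ∈ l, x ∈ T.subtree u := by
  intro l
  induction l with
  | nil => simp [unionSubtrees]
  | cons u l ih => simp [unionSubtrees, ih]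

lemma gather_list (v : V) :
    ∀ (l : List V), l.Nodup → (∀ u ∈ l, T.isChild u v) →
    (∀ u ∈ l, ∀ w' : V → ℕ, (∀ x ∈ T.subtree u, w' x = 1) →
      AcqReach T.graph w'
        (fun x => if x = u then (T.subtree u).card else if x ∈ T.subtree u then 0 else w' x)) →
    ∀ w : V → ℕ, (∀ u ∈ l, ∀ x ∈ T.subtree u, w x = 1) →
    (∀ (j : ℕ) (hj : j < l.length),
      (T.subtree l[j]).card ≤ w v + ((l.take j).map fun u => (T.subtree u).card).sum) →
    AcqReach T.graph w
      (fun x => if x = v then w v + (l.map fun u => (T.subtree u).card).sum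
        else if x ∈ unionSubtrees T l then 0 else w x) := by
  intro l
  induction l with
  | nil =>
    intro _ _ _ w _ _
    have : (fun x => if x = v then w v + (([] : List V).map fun u => (T.subtree u).card).sum
        else if x ∈ unionSubtrees T ([] : List V) then 0 else w x) = w := by
      funext x
      by_cases hx : x = v <;> simp [hx, unionSubtrees]
    rw [this]
    exact Relation.ReflTransGen.refl
  | cons u l ih =>
    intro hnd hch hIH w hone hlegal
    have hchu : T.isChild u v := hch u ((List.mem_cons_self (a := u) (l := l)))
    have hvu : v ∉ T.subtree u := T.not_mem_subtree_child hchu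
    have huu : u ∈ T.subtree u := T.self_mem_subtree u
    have hvne : v ≠ u := fun h => hvu (h ▸ huu)
    -- step A: gather subtree of u at u
    have stepA := hIH u ((List.mem_cons_self (a := u) (l := l))) w (hone u ((List.mem_cons_self (a := u) (l := l))))
    set w₁ : V → ℕ := fun x => if x = u then (T.subtree u).card
        else if x ∈ T.subtree u then 0 else w x with hw₁
    -- step B: move from u to v
    have hw₁u : w₁ u = (T.subtree u).card := by simp [hw₁]
    have hw₁v : w₁ v = w v := by simp [hw₁, hvne, hvu]
    have hcard_pos : 0 < (T.subtree u).card := Finset.card_pos.2 ⟨u, huu⟩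
    have hlegal0 : (T.subtree u).card ≤ w v := by
      have := hlegal 0 (by simp)
      simpa using this
    set w₂ : V → ℕ := Function.update (Function.update w₁ u 0) v (w₁ v + w₁ u) with hw₂
    have stepB : AcqMove T.graph w₁ w₂ :=
      ⟨u, v, T.adj_of_child hchu, by rw [hw₁u]; exact hcard_pos,
        by rw [hw₁u, hw₁v]; exact hlegal0, rfl⟩
    have hw₂v : w₂ v = w v + (T.subtree u).card := by
      simp [hw₂, hw₁v, hw₁u]
    have hw₂u : w₂ u = 0 := by
      simp [hw₂, Function.update_of_ne (fun h => hvne h.symm), hvne.symm]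
    have hw₂other : ∀ x, x ≠ v → x ≠ u → w₂ x = w₁ x := by
      intro x hxv hxu
      simp [hw₂, Function.update_of_ne hxv, Function.update_of_ne hxu]
    -- step C: recursive call on l
    have hdisj : ∀ u' ∈ l, ∀ x ∈ T.subtree u', x ∉ T.subtree u ∧ x ≠ u ∧ x ≠ v := by
      intro u' hu' x hx
      have hchu' : T.isChild u' v := hch u' (List.mem_cons_of_mem u hu')
      have hne : u ≠ u' := fun h => (List.nodup_cons.1 hnd).1 (h ▸ hu')
      refine ⟨fun hxu => T.subtree_disjoint hchu hchu' hne hxu hx, ?_, ?_⟩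
      · intro h
        exact T.subtree_disjoint hchu hchu' hne huu (h ▸ hx)
      · intro h
        exact T.not_mem_subtree_child hchu' (h ▸ hx)
    have hone₂ : ∀ u' ∈ l, ∀ x ∈ T.subtree u', w₂ x = 1 := by
      intro u' hu' x hx
      obtain ⟨h1, h2, h3⟩ := hdisj u' hu' x hx
      rw [hw₂other x h3 h2, hw₁]
      simp only [if_neg h2, if_neg h1]
      exact hone u' (List.mem_cons_of_mem u hu') x hx
    have hlegal₂ : ∀ (j : ℕ) (hj : j < l.length),
        (T.subtree l[j]).card ≤ w₂ v + ((l.take j).map fun u => (T.subtree u).card).sum := by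
      intro j hj
      have := hlegal (j + 1) (by simpa using Nat.succ_lt_succ hj)
      rw [hw₂v]
      simpa [Nat.add_assoc] using this
    have stepC := ih (List.nodup_cons.1 hnd).2 (fun u' hu' => hch u' (List.mem_cons_of_mem u hu'))
      (fun u' hu' => hIH u' (List.mem_cons_of_mem u hu')) w₂ hone₂ hlegal₂
    -- combine
    have hfinal : (fun x => if x = v then w₂ v + (l.map fun u => (T.subtree u).card).sum
        else if x ∈ unionSubtrees T l then 0 else w₂ x)
        = (fun x => if x = v then w v + ((u :: l).map fun u => (T.subtree u).card).sum
        else if x ∈ unionSubtrees T (u :: l) then 0 else w x) := by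
      funext x
      by_cases hxv : x = v
      · simp [hxv, hw₂v, Nat.add_assoc]
      · simp only [if_neg hxv]
        by_cases hxl : x ∈ unionSubtrees T l
        · have : x ∈ unionSubtrees T (u :: l) := by
            rw [mem_unionSubtrees] at hxl ⊢
            obtain ⟨u', hu', hx⟩ := hxl
            exact ⟨u', List.mem_cons_of_mem u hu', hx⟩
          simp [hxl, this]
        · simp only [if_neg hxl]
          by_cases hxu : x ∈ T.subtree u
          · have hin : x ∈ unionSubtrees T (u :: l) := by
              rw [mem_unionSubtrees]; exact ⟨u, (List.mem_cons_self (a := u) (l := l)), hxu⟩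
            have hxu' : x ≠ u ∨ x = u := (ne_or_eq x u)
            rcases hxu' with hxu' | rfl
            · rw [if_pos hin, hw₂other x hxv hxu', hw₁]
              simp [if_neg hxu', if_pos hxu]
            · rw [if_pos hin, hw₂u]
          · have hnin : x ∉ unionSubtrees T (u :: l) := by
              rw [mem_unionSubtrees]
              rintro ⟨u', hu', hx⟩
              rcases List.mem_cons.1 hu' with rfl | hu'
              · exact hxu hx
              · exact hxl ((mem_unionSubtrees T).2 ⟨u', hu', hx⟩)
            have hxu' : x ≠ u := fun h => hxu (h ▸ huu)
            rw [if_neg hnin, hw₂other x hxv hxu', hw₁]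
            simp [if_neg hxu', if_neg hxu]
    rw [← hfinal]
    exact Relation.ReflTransGen.trans stepA (Relation.ReflTransGen.head stepB stepC)

lemma gather (hco : T.CutOff) : ∀ (n : ℕ) (v : V), (T.subtree v).card = n →
    ∀ w : V → ℕ, (∀ x ∈ T.subtree v, w x = 1) →
    AcqReach T.graph w
      (fun x => if x = v then (T.subtree v).card else if x ∈ T.subtree v then 0 else w x) := by
  intro n
  induction n using Nat.strong_induction_on with
  | _ n IH =>
    intro v hcard w hw
    obtain ⟨l, hnd, hmem, i', hlt, hge⟩ := hco v
    have hch : ∀ u ∈ l, T.isChild u v := fun u hu => (hmem u).1 hu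
    -- subtree card bound
    have hsub : ∀ (j : ℕ) (hj : j < l.length), (T.subtree l[j]).card ≤ 2 ^ (min j i') := by
      intro j hj
      rcases lt_or_ge j i' with hji | hji
      · rw [min_eq_left hji.le, ← hlt j hj hji]
      · rw [min_eq_right hji]; exact hge j hj hji
    -- partial sums bound
    have hsum : ∀ j, j ≤ l.length →
        2 ^ (min j i') ≤ 1 + ((l.take j).map fun u => (T.subtree u).card).sum := by
      intro j
      induction j with
      | zero => simp
      | succ j ihj =>
        intro hj
        have hjlt : j < l.length := hj
        have hrec := ihj (Nat.le_of_succ_le hj)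
        have hstep : ((l.take (j + 1)).map fun u => (T.subtree u).card).sum
            = ((l.take j).map fun u => (T.subtree u).card).sum + (T.subtree l[j]).card := by
          rw [List.map_take, List.map_take, List.sum_take_succ (l.map fun u => (T.subtree u).card) j (by simpa using hjlt)]
          simp
        rcases lt_or_ge j i' with hji | hji
        · have hm1 : min j i' = j := min_eq_left hji.le
          have hm2 : min (j + 1) i' = j + 1 := min_eq_left hji
          have hcj : (T.subtree l[j]).card = 2 ^ j := hlt j hjlt hji
          rw [hm1] at hrec
          rw [hm2, hstep, hcj, pow_succ, Nat.mul_two]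
          omega
        · have hm1 : min j i' = i' := min_eq_right hji
          have hm2 : min (j + 1) i' = i' := min_eq_right (Nat.le_succ_of_le hji)
          rw [hm1] at hrec
          rw [hm2, hstep]
          omega
    have hwv : w v = 1 := hw v (T.self_mem_subtree v)
    have hlegal : ∀ (j : ℕ) (hj : j < l.length),
        (T.subtree l[j]).card ≤ w v + ((l.take j).map fun u => (T.subtree u).card).sum := by
      intro j hj
      rw [hwv]
      exact le_trans (hsub j hj) (hsum j (Nat.le_of_lt hj))
    have hIHl : ∀ u ∈ l, ∀ w' : V → ℕ, (∀ x ∈ T.subtree u, w' x = 1) →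
        AcqReach T.graph w'
          (fun x => if x = u then (T.subtree u).card else if x ∈ T.subtree u then 0 else w' x) := by
      intro u hu w' hw'
      have hchu := hch u hu
      have hltn : (T.subtree u).card < n := by
        rw [← hcard]
        exact Finset.card_lt_card ((Finset.ssubset_iff_of_subset (T.subtree_subset hchu)).2
          ⟨v, T.self_mem_subtree v, T.not_mem_subtree_child hchu⟩)
      exact IH _ hltn u rfl w' hw'
    have hone : ∀ u ∈ l, ∀ x ∈ T.subtree u, w x = 1 := by
      intro u hu x hx
      exact hw x (T.subtree_subset (hch u hu) hx)
    have hmain := gather_list T v l hnd hch hIHl w hone hlegal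
    have heq : (fun x => if x = v then w v + (l.map fun u => (T.subtree u).card).sum
        else if x ∈ unionSubtrees T l then 0 else w x)
        = (fun x => if x = v then (T.subtree v).card else if x ∈ T.subtree v then 0 else w x) := by
      funext x
      by_cases hxv : x = v
      · simp only [if_pos hxv]
        rw [hwv, ← T.card_subtree_eq hnd hmem]
      · simp only [if_neg hxv]
        by_cases hxs : x ∈ T.subtree v
        · obtain ⟨u, hu, hxu⟩ := T.mem_subtree_cases hxs hxv
          have : x ∈ unionSubtrees T l := (mem_unionSubtrees T).2 ⟨u, (hmem u).2 hu, hxu⟩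
          simp [this, hxs]
        · have : x ∉ unionSubtrees T l := by
            rw [mem_unionSubtrees]
            rintro ⟨u, hu, hxu⟩
            exact hxs (T.subtree_subset (hch u hu) hxu)
          simp [this, hxs]
    rw [← heq]
    exact hmain

lemma sum_eq_of_move {G : SimpleGraph V} {w w' : V → ℕ} (h : AcqMove G w w') :
    ∑ x, w' x = ∑ x, w x := by
  obtain ⟨u, v, hadj, hpos, hle, heq⟩ := h
  have huv : u ≠ v := hadj.ne
  subst heq
  rw [Finset.sum_update_of_mem (Finset.mem_univ v)]
  rw [Finset.sum_update_of_mem (by simp [huv] : u ∈ Finset.univ \ {v})]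
  have h1 : ∑ x, w x = w v + ∑ x ∈ Finset.univ \ {v}, w x :=
    Finset.sum_eq_add_sum_sdiff_singleton_of_mem (Finset.mem_univ v) w
  have h2 : ∑ x ∈ Finset.univ \ {v}, w x
      = w u + ∑ x ∈ (Finset.univ \ {v}) \ {u}, w x :=
    Finset.sum_eq_add_sum_sdiff_singleton_of_mem (by simp [huv]) w
  omega

lemma sum_eq_of_reach {G : SimpleGraph V} {w w' : V → ℕ} (h : AcqReach G w w') :
    ∑ x, w' x = ∑ x, w x := by
  induction h with
  | refl => rfl
  | tail _ hmv ih => rw [sum_eq_of_move hmv, ih]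

end Acq
/-- If a rooted tree `T` has the cut-off property, then the root can acquire all the
weight of `T` via total acquisition moves; in particular `a_t(T) = 1`. -/
theorem stmt1 {V : Type*} [Fintype V] [DecidableEq V] (T : RTree V)
    (h : T.CutOff) :
    (∃ w, AcqReach T.graph (fun _ => 1) w ∧ w T.root = Fintype.card V ∧
      ∀ u, u ≠ T.root → w u = 0) ∧ atNum T.graph = 1 := by
  have hreach := gather T h (T.subtree T.root).card T.root rfl (fun _ => 1) (fun _ _ => rfl)
  set wf : V → ℕ := fun x => if x = T.root then (T.subtree T.root).card
      else if x ∈ T.subtree T.root then 0 else 1 with hwf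
  have hcardV : (T.subtree T.root).card = Fintype.card V := by
    rw [T.subtree_root]; exact Finset.card_univ
  have hposV : 0 < Fintype.card V := Fintype.card_pos_iff.2 ⟨T.root⟩
  have hroot : wf T.root = Fintype.card V := by simp [hwf, hcardV]
  have hzero : ∀ u, u ≠ T.root → wf u = 0 := by
    intro u hu
    simp [hwf, hu, T.subtree_root]
  have hmax : AcqMaximal T.graph wf := by
    rintro ⟨w', u, v, hadj, hpos', hle, -⟩
    by_cases hu : u = T.root
    · subst hu
      have hv : v ≠ T.root := hadj.ne'
      rw [hzero v hv, hroot] at hle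
      omega
    · rw [hzero u hu] at hpos'
      omega
  have hres : residualCard wf = 1 := by
    have hu : ∀ a : {v : V // 0 < wf v}, a.1 = T.root := by
      rintro ⟨a, ha⟩
      by_contra hne
      rw [hzero a hne] at ha
      omega
    haveI : Subsingleton {v : V // 0 < wf v} :=
      ⟨fun a b => Subtype.ext (by rw [hu a, hu b])⟩
    haveI : Nonempty {v : V // 0 < wf v} := ⟨⟨T.root, by rw [hroot]; omega⟩⟩
    exact Nat.card_unique
  have hS1 : (1 : ℕ) ∈ { k | ∃ w, AcqReach T.graph (fun _ => 1) w ∧ AcqMaximal T.graph w ∧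
      residualCard w = k } := ⟨wf, hreach, hmax, hres⟩
  have hS0 : ∀ k ∈ { k | ∃ w, AcqReach T.graph (fun _ => 1) w ∧ AcqMaximal T.graph w ∧
      residualCard w = k }, k ≠ 0 := by
    rintro k ⟨w, hr, -, hrc⟩ hk0
    have hsum : ∑ x, w x = Fintype.card V := by
      rw [sum_eq_of_reach hr]
      simp
    have hex : ∃ x, 0 < w x := by
      by_contra hno
      push_neg at hno
      have : ∑ x, w x = 0 := Finset.sum_eq_zero fun x _ => Nat.le_zero.1 (hno x)
      omega
    obtain ⟨x, hx⟩ := hex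
    haveI : Nonempty {v : V // 0 < w v} := ⟨⟨x, hx⟩⟩
    have := Nat.card_pos (α := {v : V // 0 < w v})
    rw [hk0] at hrc
    unfold residualCard at hrc
    omega
  refine ⟨⟨wf, hreach, hroot, hzero⟩, ?_⟩
  unfold atNum
  have hle := Nat.sInf_le hS1
  have hmem := Nat.sInf_mem (⟨1, hS1⟩ : Set.Nonempty _)
  have hne := hS0 _ hmem
  omega
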